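/- Let H be a finite-dimensional complex Hilbert space, n ≥ 1, and let A_1, …, A_n and B_1, …, B_n be orthogonal projections on H such that A_m A_k = A_k A_m for all m, k; B_m B_k = B_k B_m for all m, k; and A_m B_k = B_k A_m whenever k < m. Then Tr( B_n A_n ⋯ B_1 A_1 · A_1 B_1 ⋯ A_n B_n ) = Tr( A_1 B_1 ⋯ A_n B_n ). Equivalently, with d = dim H, Tr( B_n A_n ⋯ B_1 A_1 (1/d) A_1 B_1 ⋯ A_n B_n ) = (1/d) Tr( A_1 B_1 ⋯ A_n B_n ). -/

import Mathlib

open Matrix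

section aux

variable {M : Type*} [Monoid M]

private lemma swap_aux {u v : M} (h : u * v = v * u) (x : M) :
    u * (v * x) = v * (u * x) := by rw [← mul_assoc, h, mul_assoc]

/-- Auxiliary lemma over ℕ-indexed families: absorption, collapse, and reversal identities. -/
private lemma stmt4_aux (A B : ℕ → M)
    (hAidem : ∀ k, A k * A k = A k) (hBidem : ∀ k, B k * B k = B k)
    (hAA : ∀ m k, A m * A k = A k * A m)
    (hBB : ∀ m k, B m * B k = B k * B m)
    (hAB : ∀ m k : ℕ, k < m → A m * B k = B k * A m) (m : ℕ) :
    ((List.range m).map (fun k => A k * B k)).prod *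
      ((List.range m).map B).prod = ((List.range m).map (fun k => A k * B k)).prod ∧
    ((List.range m).map (fun k => B k * A k)).reverse.prod *
      ((List.range m).map (fun k => A k * B k)).prod
      = ((List.range m).map B).reverse.prod *
        ((List.range m).map (fun k => A k * B k)).prod ∧
    ((List.range m).map B).reverse.prod = ((List.range m).map B).prod := by
  induction m with
  | zero => simp
  | succ m ih =>
    obtain ⟨habs, hcol, hrev⟩ := ih
    have hBQ : ∀ j, B j * ((List.range m).map B).prod
        = ((List.range m).map B).prod * B j := by
      intro j
      refine Commute.list_prod_right _ _ ?_
      intro x hx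
      obtain ⟨k, _, rfl⟩ := List.mem_map.mp hx
      exact hBB j k
    have hAQ : A m * ((List.range m).map B).prod
        = ((List.range m).map B).prod * A m := by
      refine Commute.list_prod_right _ _ ?_
      intro x hx
      obtain ⟨k, hk, rfl⟩ := List.mem_map.mp hx
      exact hAB m k (List.mem_range.mp hk)
    have hAQr : A m * ((List.range m).map B).reverse.prod
        = ((List.range m).map B).reverse.prod * A m := by
      rw [hrev]; exact hAQ
    have hAR : A m * ((List.range m).map (fun k => A k * B k)).prod
        = ((List.range m).map (fun k => A k * B k)).prod * A m := by
      refine Commute.list_prod_right _ _ ?_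
      intro x hx
      obtain ⟨k, hk, rfl⟩ := List.mem_map.mp hx
      exact Commute.mul_right (hAA m k) (hAB m k (List.mem_range.mp hk))
    simp only [List.range_succ, List.map_append, List.map_cons, List.map_nil,
      List.prod_append, List.prod_cons, List.prod_nil, List.reverse_append,
      List.reverse_cons, List.reverse_nil, List.nil_append, List.cons_append,
      mul_one]
    set R := ((List.range m).map (fun k => A k * B k)).prod with hR
    set Q := ((List.range m).map B).prod with hQ
    set L := ((List.range m).map (fun k => B k * A k)).reverse.prod with hL
    set Qr := ((List.range m).map B).reverse.prod with hQr
    have hcol' : ∀ x : M, L * (R * x) = Qr * (R * x) := by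
      intro x; rw [← mul_assoc, hcol, mul_assoc]
    refine ⟨?_, ?_, ?_⟩
    · -- absorption
      simp only [mul_assoc]
      rw [swap_aux (hBQ m), hBidem m, swap_aux hAQ, ← mul_assoc R Q, habs]
    · -- collapse
      simp only [mul_assoc]
      rw [hcol', swap_aux hAQr, swap_aux hAR, ← mul_assoc (A m), hAidem]
    · -- reversal
      rw [hrev, hBQ m]

end aux

/-- Let `H` be a finite-dimensional complex Hilbert space (modelled as `ℂ^d`
with operators given by matrices), `n ≥ 1`, and `A_1, …, A_n`, `B_1, …, B_n` orthogonal
projections such that the `A`'s commute among themselves, the `B`'s commute among themselves,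
and `A_m` commutes with `B_k` whenever `k < m`.  Then
`Tr(B_n A_n ⋯ B_1 A_1 · A_1 B_1 ⋯ A_n B_n) = Tr(A_1 B_1 ⋯ A_n B_n)`. -/
theorem stmt4 {d : Type} [Fintype d] [DecidableEq d] {n : ℕ} (hn : 1 ≤ n)
    (A B : Fin n → Matrix d d ℂ)
    (hAherm : ∀ k, (A k)ᴴ = A k) (hAidem : ∀ k, A k * A k = A k)
    (hBherm : ∀ k, (B k)ᴴ = B k) (hBidem : ∀ k, B k * B k = B k)
    (hAA : ∀ m k, A m * A k = A k * A m)
    (hBB : ∀ m k, B m * B k = B k * B m)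
    (hAB : ∀ m k : Fin n, k < m → A m * B k = B k * A m) :
    Matrix.trace ((List.ofFn (fun k => B k * A k)).reverse.prod *
        (List.ofFn (fun k => A k * B k)).prod)
      = Matrix.trace ((List.ofFn (fun k => A k * B k)).prod) := by
  -- extend to ℕ-indexed families
  set A' : ℕ → Matrix d d ℂ := fun k => if h : k < n then A ⟨k, h⟩ else 1 with hA'
  set B' : ℕ → Matrix d d ℂ := fun k => if h : k < n then B ⟨k, h⟩ else 1 with hB'
  have hA'v : ∀ i : Fin n, A' i.val = A i := by
    intro i; simp [hA', i.isLt]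
  have hB'v : ∀ i : Fin n, B' i.val = B i := by
    intro i; simp [hB', i.isLt]
  have key := stmt4_aux A' B'
    (by intro k; by_cases h : k < n <;> simp [hA', h, hAidem])
    (by intro k; by_cases h : k < n <;> simp [hB', h, hBidem])
    (by intro m k; by_cases hm : m < n <;> by_cases hk : k < n <;>
        simp [hA', hm, hk, hAA])
    (by intro m k; by_cases hm : m < n <;> by_cases hk : k < n <;>
        simp [hB', hm, hk, hBB])
    (by intro m k hkm
        by_cases hm : m < n
        · have hk : k < n := lt_trans hkm hm
          simp only [hA', hB', dif_pos hm, dif_pos hk]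
          exact hAB ⟨m, hm⟩ ⟨k, hk⟩ hkm
        · simp [hA', hm]) n
  obtain ⟨habs, hcol, hrev⟩ := key
  have hofn1 : List.ofFn (fun k => A k * B k)
      = (List.range n).map (fun k => A' k * B' k) := by
    rw [← (show (List.finRange n).map Fin.val = List.range n from
      List.ext_getElem (by simp) (by simp)), List.map_map, List.ofFn_eq_map]
    refine List.map_congr_left ?_
    intro i _
    simp [Function.comp, hA'v, hB'v]
  have hofn2 : List.ofFn (fun k => B k * A k)
      = (List.range n).map (fun k => B' k * A' k) := by
    rw [← (show (List.finRange n).map Fin.val = List.range n from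
      List.ext_getElem (by simp) (by simp)), List.map_map, List.ofFn_eq_map]
    refine List.map_congr_left ?_
    intro i _
    simp [Function.comp, hA'v, hB'v]
  rw [hofn1, hofn2, hcol, hrev, Matrix.trace_mul_comm, habs]
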